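/- The randomized oracle sets are nested in distribution: for τ ≤ τ', and the same uniform variable U, S(U;π,τ) ⊆ S(U;π,τ'). -/
import Mathlib


open MeasureTheory Finset

noncomputable section

/-- Number of labels with strictly larger probability than `y`. -/
def nAbove {C : ℕ} (π : Fin C → ℝ) (y : Fin C) : ℕ :=
  (Finset.univ.filter (fun y' => π y < π y')).card

/-- The set of labels attaining the `c` largest probabilities
(well-defined as a set of size `min c C` when the entries of `π` are distinct). -/
def topSet {C : ℕ} (π : Fin C → ℝ) (c : ℕ) : Finset (Fin C) :=
  Finset.univ.filter (fun y => nAbove π y < c)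

/-- The `r`-th largest entry of `π` (0-indexed: `sortedDesc π 0 = π_(1)`),
and `0` if `r` is out of range. -/
def sortedDesc {C : ℕ} (π : Fin C → ℝ) (r : ℕ) : ℝ :=
  if h : r < C then π ((Tuple.sort π) (Fin.rev ⟨r, h⟩)) else 0

/-- Sum of the `c` largest entries of `π`: `π_(1) + ... + π_(c)`. -/
def topSum {C : ℕ} (π : Fin C → ℝ) (c : ℕ) : ℝ :=
  ∑ r ∈ Finset.range c, sortedDesc π r

/-- Generalized conditional quantile `L(π, τ) = min {c ∈ {1,...,C} : π_(1) + ... + π_(c) ≥ τ}`. -/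
def Lgen {C : ℕ} (π : Fin C → ℝ) (τ : ℝ) : ℕ :=
  sInf {c : ℕ | 1 ≤ c ∧ τ ≤ topSum π c}

/-- `V(π, τ) = (∑_{c=1}^{L(π,τ)} π_(c) − τ) / π_(L(π,τ))`. -/
def Vgen {C : ℕ} (π : Fin C → ℝ) (τ : ℝ) : ℝ :=
  (topSum π (Lgen π τ) - τ) / sortedDesc π (Lgen π τ - 1)

/-- The randomized oracle prediction set `S(u; π, τ)`: the top `L(π,τ) − 1` labels
if `u ≤ V(π,τ)`, and the top `L(π,τ)` labels otherwise. -/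
def Sgen {C : ℕ} (u : ℝ) (π : Fin C → ℝ) (τ : ℝ) : Finset (Fin C) :=
  if u ≤ Vgen π τ then topSet π (Lgen π τ - 1) else topSet π (Lgen π τ)

/-- The generalized inverse quantile conformity score
`E(y, u; π) = min {τ ∈ [0,1] : y ∈ S(u; π, τ)}`. -/
def Egen {C : ℕ} (y : Fin C) (u : ℝ) (π : Fin C → ℝ) : ℝ :=
  sInf {τ : ℝ | τ ∈ Set.Icc (0 : ℝ) 1 ∧ y ∈ Sgen u π τ}

lemma topSet_mono {C : ℕ} (π : Fin C → ℝ) {c c' : ℕ} (h : c ≤ c') :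
    topSet π c ⊆ topSet π c' := by
  intro y hy
  simp only [topSet, Finset.mem_filter, Finset.mem_univ, true_and] at hy ⊢
  omega

lemma topSum_all {C : ℕ} (π : Fin C → ℝ) : topSum π C = ∑ y, π y := by
  unfold topSum
  rw [← Fin.sum_univ_eq_sum_range]
  have : ∀ i : Fin C, sortedDesc π i = π ((Tuple.sort π) (Fin.rev i)) := by
    intro i
    simp [sortedDesc, i.isLt]
  rw [Finset.sum_congr rfl (fun i _ => this i)]
  exact Equiv.sum_comp (Fin.revPerm.trans (Tuple.sort π)) π

lemma Lgen_mem {C : ℕ} (π : Fin C → ℝ) (hC : 0 < C) (hsum : ∑ y, π y = 1)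
    {τ : ℝ} (hτ : τ ≤ 1) :
    Lgen π τ ∈ {c : ℕ | 1 ≤ c ∧ τ ≤ topSum π c} := by
  apply Nat.sInf_mem
  exact ⟨C, hC, by rw [topSum_all, hsum]; exact hτ⟩

lemma Lgen_le_C {C : ℕ} (π : Fin C → ℝ) (hC : 0 < C) (hsum : ∑ y, π y = 1)
    {τ : ℝ} (hτ : τ ≤ 1) : Lgen π τ ≤ C :=
  Nat.sInf_le ⟨hC, by rw [topSum_all, hsum]; exact hτ⟩

lemma Lgen_mono {C : ℕ} (π : Fin C → ℝ) (hC : 0 < C) (hsum : ∑ y, π y = 1)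
    {τ τ' : ℝ} (hle : τ ≤ τ') (hτ' : τ' ≤ 1) : Lgen π τ ≤ Lgen π τ' := by
  have h := Lgen_mem π hC hsum hτ'
  exact Nat.sInf_le ⟨h.1, hle.trans h.2⟩

lemma sortedDesc_pos {C : ℕ} (π : Fin C → ℝ) (hpos : ∀ y, 0 < π y)
    {r : ℕ} (hr : r < C) : 0 < sortedDesc π r := by
  simp only [sortedDesc, hr, dif_pos]
  exact hpos _

/-- The randomized oracle sets are nested: for `τ ≤ τ'` and the same uniform
realization `u`, `S(u; π, τ) ⊆ S(u; π, τ')`. -/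
theorem oracle_nested {C : ℕ} (π : Fin C → ℝ)
    (hpos : ∀ y, 0 < π y) (hsum : ∑ y, π y = 1) (hinj : Function.Injective π)
    (τ τ' : ℝ) (hτ : τ ∈ Set.Ioc (0 : ℝ) 1) (hτ' : τ' ∈ Set.Ioc (0 : ℝ) 1)
    (hle : τ ≤ τ') (u : ℝ) (hu : u ∈ Set.Icc (0 : ℝ) 1) :
    Sgen u π τ ⊆ Sgen u π τ' := by
  have hC : 0 < C := by
    by_contra h
    have : C = 0 := by omega
    subst this
    simp at hsum
  have hLτ := Lgen_mem π hC hsum hτ.2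
  have hLle := Lgen_mono π hC hsum hle hτ'.2
  by_cases hL : Lgen π τ = Lgen π τ'
  · -- same L: compare V's
    have hd : 0 < sortedDesc π (Lgen π τ - 1) := by
      apply sortedDesc_pos π hpos
      have := Lgen_le_C π hC hsum hτ.2
      omega
    have hV : Vgen π τ' ≤ Vgen π τ := by
      unfold Vgen
      rw [← hL]
      gcongr
    by_cases hu' : u ≤ Vgen π τ'
    · have huτ : u ≤ Vgen π τ := hu'.trans hV
      simp [Sgen, hu', huτ, hL]
    · simp only [Sgen, hu', if_neg, if_false]
      split
      · exact topSet_mono π (hL ▸ Nat.sub_le (Lgen π τ) 1)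
      · rw [hL]
  · -- Lgen τ < Lgen τ'
    have hlt : Lgen π τ < Lgen π τ' := lt_of_le_of_ne hLle hL
    have h1 : Sgen u π τ ⊆ topSet π (Lgen π τ) := by
      unfold Sgen; split
      · exact topSet_mono π (by omega)
      · exact subset_rfl
    have h2 : topSet π (Lgen π τ' - 1) ⊆ Sgen u π τ' := by
      unfold Sgen; split
      · exact subset_rfl
      · exact topSet_mono π (by omega)
    exact h1.trans ((topSet_mono π (by omega)).trans h2)
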